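/- The Thue-Morse sequence is cube-free: it contains no nonempty factor of the form www. -/

import Mathlib

open Fin.NatCast in
/-- The Thue-Morse sequence: parity of the number of 1 bits of `n`. -/
def thueMorse (n : ℕ) : Fin 2 := (n.bits.count true : Fin 2)

/-- `w` is the factor of the infinite sequence `s` starting at position `i`. -/
def FactorAt {α : Type*} (s : ℕ → α) (i : ℕ) (w : List α) : Prop :=
  w = (List.range w.length).map (fun j => s (i + j))

/-- `w` is a factor (contiguous finite subword) of the infinite sequence `s`. -/
def IsFactor {α : Type*} (s : ℕ → α) (w : List α) : Prop := ∃ i, FactorAt s i w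

lemma tm_even (n : ℕ) : thueMorse (2*n) = thueMorse n := by
  rcases Nat.eq_zero_or_pos n with h | h
  · simp [h]
  · unfold thueMorse
    rw [Nat.bit0_bits n h.ne']
    simp

open Fin.NatCast in
lemma tm_odd (n : ℕ) : thueMorse (2*n+1) = thueMorse n + 1 := by
  unfold thueMorse
  rw [Nat.bit1_bits n]
  simp [add_comm]

lemma fin2_ne : ∀ x : Fin 2, x ≠ x + 1 := by decide

lemma fin2_add : ∀ x : Fin 2, x + 1 + 1 = x := by decide

/-- The Thue–Morse sequence has no window of length `2n` with period `n`. -/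
lemma no_period : ∀ n, 0 < n → ∀ i,
    ¬ (∀ k, k < 2*n → thueMorse (i+k) = thueMorse (i+k+n)) := by
  intro n
  induction n using Nat.strong_induction_on with
  | _ n IH =>
  intro hn i h
  rcases Nat.even_or_odd n with ⟨m, hm⟩ | ⟨m, hm⟩
  · -- n = 2m, reduce to m
    have hm1 : 0 < m := by omega
    apply IH m (by omega) hm1 ((i+1)/2)
    intro k hk
    set j := (i+1)/2 + k with hj
    have h1 : i ≤ 2*j := by omega
    have h2 : 2*j < i + 2*n := by omega
    have := h (2*j - i) (by omega)
    rw [show i + (2*j - i) = 2*j by omega,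
        show 2*j + n = 2*(j+m) by omega, tm_even, tm_even] at this
    simpa [hj, add_assoc] using this
  · -- n = 2m+1
    have A : ∀ j, i ≤ 2*j → 2*j < i + 2*n → thueMorse j = thueMorse (j+m) + 1 := by
      intro j h1 h2
      have := h (2*j - i) (by omega)
      rw [show i + (2*j - i) = 2*j by omega,
          show 2*j + n = 2*(j+m)+1 by omega, tm_even, tm_odd] at this
      exact this
    have B : ∀ j, i ≤ 2*j+1 → 2*j+1 < i + 2*n → thueMorse j + 1 = thueMorse (j+m+1) := by
      intro j h1 h2
      have := h (2*j + 1 - i) (by omega)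
      rw [show i + (2*j+1 - i) = 2*j+1 by omega,
          show 2*j+1 + n = 2*(j+m+1) by omega, tm_even, tm_odd] at this
      exact this
    rcases Nat.eq_zero_or_pos m with hm0 | hm0
    · -- n = 1
      have := A ((i+1)/2) (by omega) (by omega)
      rw [hm0, Nat.add_zero] at this
      exact fin2_ne _ this
    · -- choose j with j + m even, i ≤ 2j, 2j+1 < i+2n
      obtain ⟨j, hj1, hj2, k, hjk⟩ :
          ∃ j, i ≤ 2*j ∧ 2*j+1 < i+2*n ∧ ∃ k, j + m = 2*k := by
        rcases Nat.even_or_odd ((i+1)/2 + m) with ⟨k, hk⟩ | ⟨k, hk⟩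
        · exact ⟨(i+1)/2, by omega, by omega, k, by omega⟩
        · exact ⟨(i+1)/2 + 1, by omega, by omega, k+1, by omega⟩
      have hA := A j hj1 (by omega)
      have hB := B j (by omega) hj2
      have heq : thueMorse (j+m) = thueMorse (j+m+1) := by
        rw [← hB, hA, fin2_add]
      rw [hjk, tm_even, tm_odd] at heq
      exact fin2_ne _ heq

/-- the Thue–Morse sequence is cube-free: it contains no nonempty
factor of the form `w·w·w`. -/
theorem thueMorse_cubeFree :
    ¬ ∃ w : List (Fin 2), w ≠ [] ∧ IsFactor thueMorse (w ++ w ++ w) := by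
  rintro ⟨w, hw, i, hfac⟩
  set n := w.length with hn
  have hn0 : 0 < n := List.length_pos_iff.mpr hw
  have hlen : (w ++ w ++ w).length = n + (n + n) := by simp [hn]
  rw [FactorAt, hlen] at hfac
  simp only [List.range_add, List.map_append, List.map_map] at hfac
  rw [← List.append_assoc] at hfac
  have h1 := List.append_inj (List.append_inj hfac (by simp [hn])).1 (by simp [hn])
  have h2 := List.append_inj hfac (by simp [hn])
  have e1 := h1.1
  have e2 := h1.2
  have e3 := h2.2
  have pAB : ∀ k, k < n → thueMorse (i + k) = thueMorse (i + (n + k)) := by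
    intro k hk
    have := congrArg (fun l => l[k]?) (e1.symm.trans e2)
    simpa [List.getElem?_range hk] using this
  have pBC : ∀ k, k < n → thueMorse (i + (n + k)) = thueMorse (i + (n + n + k)) := by
    intro k hk
    have := congrArg (fun l => l[k]?) (e2.symm.trans e3)
    simpa [List.getElem?_range hk] using this
  apply no_period n hn0 i
  intro k hk
  rcases Nat.lt_or_ge k n with h | h
  · rw [pAB k h]; congr 1; omega
  · rw [show i + k = i + (n + (k - n)) by omega, pBC (k - n) (by omega)]
    congr 1; omega
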